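/- The class of languages accepted by quasi-deterministic sensing 5'→3' WK automata is not closed under union: there exist languages L₁ and L₂, each accepted by a quasi-deterministic sensing 5'→3' WK automaton (namely L₁ = { aⁿbⁿ : n ≥ 0 } and L₂ = { aⁿb²ⁿ : n ≥ 0 }), such that L₁ ∪ L₂ is not accepted by any quasi-deterministic sensing 5'→3' WK automaton. -/

import Mathlib

open Computability

/-- The two-letter alphabet `{a, b}`. -/
inductive Letter : Type
  | a : Letter
  | b : Letter
deriving DecidableEq

instance instFintypeLetter : Fintype Letter :=
  ⟨{Letter.a, Letter.b}, fun x => by cases x <;> simp⟩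

open Letter

/-- A sensing 5'→3' Watson-Crick automaton over the alphabet `T` with state set `Q`:
an initial state `q0`, a set `F` of final states, and a transition mapping
`δ : Q × T* × T* → 2^Q` that is nonempty for only finitely many triples. -/
structure WKAutomaton (T : Type) (Q : Type) where
  q0 : Q
  F : Set Q
  δ : Q → List T → List T → Set Q
  finite_delta : {t : Q × List T × List T | (δ t.1 t.2.1 t.2.2).Nonempty}.Finite

namespace WKAutomaton

variable {T Q : Type}

/-- One computation step on configurations:
`(q, x ++ w' ++ y) ⇒ (q', w')` iff `q' ∈ δ q x y`. -/
def Step (A : WKAutomaton T Q) (c c' : Q × List T) : Prop :=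
  ∃ x y : List T, c.2 = x ++ c'.2 ++ y ∧ c'.1 ∈ A.δ c.1 x y

/-- The accepted language: words `w` with `(q₀, w) ⇒* (q_F, λ)` for some final `q_F`. -/
def Lang (A : WKAutomaton T Q) : Set (List T) :=
  {w | ∃ qf ∈ A.F, Relation.ReflTransGen A.Step (A.q0, w) (qf, [])}

/-- `A` is deterministic: in every configuration at most one computation step
(choice of `x`, `y`, `w'`, `q'`) is applicable. -/
def Deterministic (A : WKAutomaton T Q) : Prop :=
  ∀ (q : Q) (w x₁ y₁ w₁ x₂ y₂ w₂ : List T) (q₁ q₂ : Q),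
    w = x₁ ++ w₁ ++ y₁ → q₁ ∈ A.δ q x₁ y₁ →
    w = x₂ ++ w₂ ++ y₂ → q₂ ∈ A.δ q x₂ y₂ →
    x₁ = x₂ ∧ y₁ = y₂ ∧ w₁ = w₂ ∧ q₁ = q₂

/-- `A` is quasi-deterministic: for every configuration `(q,w)`, whenever
`(q,w) ⇒ (p,u)` and `(q,w) ⇒ (r,v)`, it holds that `p = r`. -/
def QuasiDet (A : WKAutomaton T Q) : Prop :=
  ∀ (q : Q) (w : List T) (p r : Q) (u v : List T),
    A.Step (q, w) (p, u) → A.Step (q, w) (r, v) → p = r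

/-- `A` is state-deterministic: for every state `q` there is at most one state `p`
with `p ∈ δ(q,u,v)` for some words `u`, `v`. -/
def StateDet (A : WKAutomaton T Q) : Prop :=
  ∀ (q p₁ p₂ : Q) (u₁ v₁ u₂ v₂ : List T),
    p₁ ∈ A.δ q u₁ v₁ → p₂ ∈ A.δ q u₂ v₂ → p₁ = p₂

/-- `A` is stateless: `Q = F = {q₀}`. -/
def Stateless (A : WKAutomaton T Q) : Prop :=
  (∀ q : Q, q = A.q0) ∧ A.F = {A.q0}

/-- `A` is all-final: `Q = F`. -/
def AllFinal (A : WKAutomaton T Q) : Prop := A.F = Set.univ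

/-- `A` is simple: at most one head reads in each step. -/
def Simple (A : WKAutomaton T Q) : Prop :=
  ∀ (q : Q) (u v : List T), (A.δ q u v).Nonempty → u = [] ∨ v = []

/-- `A` is 1-limited: exactly one letter is read in each step. -/
def OneLimited (A : WKAutomaton T Q) : Prop :=
  ∀ (q : Q) (u v : List T), (A.δ q u v).Nonempty →
    (u = [] ∧ v.length = 1) ∨ (u.length = 1 ∧ v = [])

end WKAutomaton

/-- Equality of languages modulo the empty word. -/
def EqModLambda {T : Type} (L₁ L₂ : Set (List T)) : Prop :=
  ∀ w : List T, w ≠ [] → (w ∈ L₁ ↔ w ∈ L₂)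

/-- `L` is accepted (modulo the empty word) by some sensing 5'→3' WK automaton
with a finite state set satisfying the property `P`. -/
def AcceptsWith (T : Type) (P : ∀ Q : Type, WKAutomaton T Q → Prop)
    (L : Set (List T)) : Prop :=
  ∃ (Q : Type) (_ : Finite Q) (A : WKAutomaton T Q), P Q A ∧ EqModLambda A.Lang L

/-- The language `{ aⁿbⁿ : n ≥ 0 }`. -/
def Lanbn : Set (List Letter) :=
  {w | ∃ n : ℕ, w = List.replicate n a ++ List.replicate n b}

/-- The language `{ aⁿb²ⁿ : n ≥ 0 }`. -/
def Lanb2n : Set (List Letter) :=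
  {w | ∃ n : ℕ, w = List.replicate n a ++ List.replicate (2 * n) b}

namespace WKUnionProof

/-- the word `a^p b^q` -/
def wrd (p q : ℕ) : List Letter := List.replicate p a ++ List.replicate q b

lemma wrd_length (p q : ℕ) : (wrd p q).length = p + q := by simp [wrd]

lemma wrd_ne_nil {p q : ℕ} (h : 0 < p + q) : wrd p q ≠ [] := by
  intro hw
  have := congrArg List.length hw
  rw [wrd_length] at this
  simp at this
  omega

lemma wrd_inj {p q p' q' : ℕ} (h : wrd p q = wrd p' q') : p = p' ∧ q = q' := by
  have ha := congrArg (List.count a) h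
  have hb := congrArg (List.count b) h
  simp [wrd, List.count_append, List.count_replicate] at ha hb
  exact ⟨ha, hb⟩

lemma split_wrd {i j p q : ℕ} (hi : i ≤ p) (hj : j ≤ q) :
    wrd p q = List.replicate i a ++ wrd (p - i) (q - j) ++ List.replicate j b := by
  have h1 : List.replicate p a = List.replicate i a ++ List.replicate (p - i) a := by
    rw [← List.replicate_add]; congr 1; omega
  have h2 : List.replicate q b = List.replicate (q - j) b ++ List.replicate j b := by
    rw [← List.replicate_add]; congr 1; omega
  rw [wrd, wrd, h1, h2]
  simp only [List.append_assoc]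

lemma wrd_decomp {p q : ℕ} {x w y : List Letter}
    (h : wrd p q = x ++ w ++ y) (hx : x.length ≤ p) (hy : y.length ≤ q) :
    x = List.replicate x.length a ∧ y = List.replicate y.length b ∧
      w = wrd (p - x.length) (q - y.length) := by
  have hxp : x <+: List.replicate p a := by
    have h1 : x <+: wrd p q := ⟨w ++ y, by rw [h]; simp [List.append_assoc]⟩
    have h2 : List.replicate p a <+: wrd p q := ⟨List.replicate q b, rfl⟩
    exact List.prefix_of_prefix_length_le h1 h2 (by simpa using hx)
  have hxa : x = List.replicate x.length a := by
    apply List.eq_replicate_of_mem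
    intro e he
    obtain ⟨t, ht⟩ := hxp
    exact List.eq_of_mem_replicate (ht ▸ List.mem_append_left t he)
  have hys : y <:+ List.replicate q b := by
    have h1 : y <:+ wrd p q := ⟨x ++ w, by rw [h]⟩
    have h2 : List.replicate q b <:+ wrd p q := ⟨List.replicate p a, rfl⟩
    exact List.suffix_of_suffix_length_le h1 h2 (by simpa using hy)
  have hyb : y = List.replicate y.length b := by
    apply List.eq_replicate_of_mem
    intro e he
    obtain ⟨t, ht⟩ := hys
    exact List.eq_of_mem_replicate (ht ▸ List.mem_append_right t he)
  refine ⟨hxa, hyb, ?_⟩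
  have h' : wrd p q = x ++ (wrd (p - x.length) (q - y.length) ++ y) := by
    conv_lhs => rw [split_wrd hx hy]
    conv_rhs => rw [hxa, hyb]
    simp [List.append_assoc]
  rw [List.append_assoc] at h
  have h'' := List.append_cancel_left (h.symm.trans h')
  exact List.append_cancel_right h''

lemma cons_wrd (n m : ℕ) : a :: wrd n m = wrd (n + 1) m := by
  simp [wrd, List.replicate_succ]

lemma wrd_snoc (n m : ℕ) : wrd n m ++ [b] = wrd n (m + 1) := by
  simp [wrd, List.replicate_add, List.append_assoc]



section Trail

variable {Q : Type}

def sumG (g : (ℕ × ℕ × Q) → ℕ) (L : List (ℕ × ℕ × Q)) : ℕ := (L.map g).sum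

@[simp] lemma sumG_nil (g : (ℕ × ℕ × Q) → ℕ) : sumG g ([] : List (ℕ × ℕ × Q)) = 0 := rfl

@[simp] lemma sumG_cons (g : (ℕ × ℕ × Q) → ℕ) (e : ℕ × ℕ × Q) (L : List (ℕ × ℕ × Q)) :
    sumG g (e :: L) = g e + sumG g L := by simp [sumG]

@[simp] lemma sumG_append (g : (ℕ × ℕ × Q) → ℕ) (L₁ L₂ : List (ℕ × ℕ × Q)) :
    sumG g (L₁ ++ L₂) = sumG g L₁ + sumG g L₂ := by simp [sumG]

lemma sumG_take_le (g : (ℕ × ℕ × Q) → ℕ) (L : List (ℕ × ℕ × Q)) (t : ℕ) :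
    sumG g (L.take t) ≤ sumG g L := by
  conv_rhs => rw [← List.take_append_drop t L]
  rw [sumG_append]; omega

lemma sumG_slice_le (g : (ℕ × ℕ × Q) → ℕ) (L : List (ℕ × ℕ × Q)) (t t' : ℕ) :
    sumG g ((L.take t').drop t) ≤ sumG g L := by
  have h1 : sumG g ((L.take t').drop t) ≤ sumG g (L.take t') := by
    conv_rhs => rw [← List.take_append_drop t (L.take t')]
    rw [sumG_append]; omega
  exact h1.trans (sumG_take_le g L t')

lemma sumG_take_add_slice (g : (ℕ × ℕ × Q) → ℕ) (L : List (ℕ × ℕ × Q)) {t t' : ℕ} (h : t ≤ t') :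
    sumG g (L.take t) + sumG g ((L.take t').drop t) = sumG g (L.take t') := by
  conv_rhs => rw [← List.take_append_drop t (L.take t')]
  rw [sumG_append, List.take_take, min_eq_left h]

def stAt : Q → List (ℕ × ℕ × Q) → ℕ → Q
  | s, _, 0 => s
  | s, [], _ + 1 => s
  | _, e :: L, t + 1 => stAt e.2.2 L t

@[simp] lemma stAt_zero (s : Q) (L : List (ℕ × ℕ × Q)) : stAt s L 0 = s := by
  cases L <;> rfl

@[simp] lemma stAt_cons_succ (s : Q) (e : ℕ × ℕ × Q) (L : List (ℕ × ℕ × Q)) (t : ℕ) :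
    stAt s (e :: L) (t + 1) = stAt e.2.2 L t := rfl

lemma stAt_take {s : Q} : ∀ (L : List (ℕ × ℕ × Q)) (t t' : ℕ), t ≤ t' →
    stAt s (L.take t') t = stAt s L t
  | _, 0, _, _ => by simp
  | [], _ + 1, _, _ => by simp
  | e :: L, t + 1, t' + 1, h => by
    simp only [List.take_succ_cons, stAt_cons_succ]
    exact stAt_take L t t' (by omega)

variable (A : WKAutomaton Letter Q)

def ITrail : Q → List (ℕ × ℕ × Q) → Q → Prop
  | s, [], s' => s = s'
  | s, e :: L, s' =>
      e.2.2 ∈ A.δ s (List.replicate e.1 a) (List.replicate e.2.1 b) ∧ ITrail e.2.2 L s'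

lemma ITrail_comp : ∀ {L₁ L₂ : List (ℕ × ℕ × Q)} {s m s' : Q},
    ITrail A s L₁ m → ITrail A m L₂ s' → ITrail A s (L₁ ++ L₂) s'
  | [], _, s, m, s', h₁, h₂ => by cases h₁; exact h₂
  | e :: L, _, s, m, s', h₁, h₂ => ⟨h₁.1, ITrail_comp h₁.2 h₂⟩

lemma ITrail_split : ∀ {L : List (ℕ × ℕ × Q)} {s s' : Q}, ITrail A s L s' → ∀ t, t ≤ L.length →
    ITrail A s (L.take t) (stAt s L t) ∧ ITrail A (stAt s L t) (L.drop t) s'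
  | L, s, s', h, 0, _ => by
    refine ⟨?_, ?_⟩ <;> simp [ITrail, h]
  | [], s, s', h, t + 1, ht => by simp at ht
  | e :: L, s, s', h, t + 1, ht => by
    simp only [List.take_succ_cons, List.drop_succ_cons, stAt_cons_succ]
    obtain ⟨hmem, htr⟩ := h
    have := ITrail_split htr t (by simpa using ht)
    exact ⟨⟨hmem, this.1⟩, this.2⟩

lemma ITrail_bound {k : ℕ}
    (hk : ∀ q x y, (A.δ q x y).Nonempty → x.length + y.length ≤ k) :
    ∀ {L : List (ℕ × ℕ × Q)} {s s' : Q}, ITrail A s L s' → ∀ e ∈ L, e.1 ≤ k ∧ e.2.1 ≤ k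
  | [], _, _, _, e, he => by simp at he
  | f :: L, s, s', h, e, he => by
    rcases List.mem_cons.mp he with rfl | he'
    · have := hk s _ _ ⟨e.2.2, h.1⟩
      simp at this
      omega
    · exact ITrail_bound hk h.2 e he'

lemma ITrail_run : ∀ {L : List (ℕ × ℕ × Q)} {s s' : Q}, ITrail A s L s' →
    ∀ {p q : ℕ}, sumG (fun e => e.1) L ≤ p → sumG (fun e => e.2.1) L ≤ q →
    Relation.ReflTransGen A.Step (s, wrd p q)
      (s', wrd (p - sumG (fun e => e.1) L) (q - sumG (fun e => e.2.1) L))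
  | [], s, s', h, p, q, hp, hq => by
    cases h; simpa using Relation.ReflTransGen.refl
  | e :: L, s, s', h, p, q, hp, hq => by
    simp only [sumG_cons] at hp hq ⊢
    obtain ⟨hmem, htr⟩ := h
    have hstep : A.Step (s, wrd p q) (e.2.2, wrd (p - e.1) (q - e.2.1)) :=
      ⟨List.replicate e.1 a, List.replicate e.2.1 b,
        split_wrd (by omega) (by omega), hmem⟩
    have hrest := ITrail_run htr (p := p - e.1) (q := q - e.2.1) (by omega) (by omega)
    have heq1 : p - e.1 - sumG (fun e => e.1) L = p - (e.1 + sumG (fun e => e.1) L) := by omega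
    have heq2 : q - e.2.1 - sumG (fun e => e.2.1) L = q - (e.2.1 + sumG (fun e => e.2.1) L) := by
      omega
    rw [heq1, heq2] at hrest
    exact Relation.ReflTransGen.head hstep hrest

lemma uniq_next (hqd : A.QuasiDet) {s s₁ s₂ : Q} {i₁ j₁ i₂ j₂ : ℕ}
    (h₁ : s₁ ∈ A.δ s (List.replicate i₁ a) (List.replicate j₁ b))
    (h₂ : s₂ ∈ A.δ s (List.replicate i₂ a) (List.replicate j₂ b)) : s₁ = s₂ := by
  have e₁ : wrd (i₁ + i₂) (j₁ + j₂) = List.replicate i₁ a ++ wrd i₂ j₂ ++ List.replicate j₁ b := by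
    have := split_wrd (p := i₁ + i₂) (q := j₁ + j₂) (i := i₁) (j := j₁) (by omega) (by omega)
    simpa using this
  have e₂ : wrd (i₁ + i₂) (j₁ + j₂) = List.replicate i₂ a ++ wrd i₁ j₁ ++ List.replicate j₂ b := by
    have := split_wrd (p := i₁ + i₂) (q := j₁ + j₂) (i := i₂) (j := j₂) (by omega) (by omega)
    simpa using this
  exact hqd s (wrd (i₁ + i₂) (j₁ + j₂)) s₁ s₂ (wrd i₂ j₂) (wrd i₁ j₁)
    ⟨_, _, e₁, h₁⟩ ⟨_, _, e₂, h₂⟩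

lemma states_agree (hqd : A.QuasiDet) :
    ∀ (t : ℕ) {s : Q} {L₁ L₂ : List (ℕ × ℕ × Q)} {e₁ e₂ : Q},
    ITrail A s L₁ e₁ → ITrail A s L₂ e₂ → t ≤ L₁.length → t ≤ L₂.length →
    stAt s L₁ t = stAt s L₂ t
  | 0, s, L₁, L₂, e₁, e₂, h₁, h₂, ht₁, ht₂ => by simp
  | t + 1, s, [], L₂, e₁, e₂, h₁, h₂, ht₁, ht₂ => by simp at ht₁
  | t + 1, s, f :: L₁, [], e₁, e₂, h₁, h₂, ht₁, ht₂ => by simp at ht₂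
  | t + 1, s, f :: L₁, f' :: L₂, e₁, e₂, h₁, h₂, ht₁, ht₂ => by
    have hf : f.2.2 = f'.2.2 := uniq_next A hqd h₁.1 h₂.1
    simp only [stAt_cons_succ]
    rw [hf]
    have h₁' : ITrail A f'.2.2 L₁ e₁ := hf ▸ h₁.2
    exact states_agree hqd t h₁' h₂.2 (by simpa using ht₁) (by simpa using ht₂)


lemma sumG_take_eq (g : (ℕ × ℕ × Q) → ℕ) (dflt : ℕ × ℕ × Q) :
    ∀ (L : List (ℕ × ℕ × Q)) (T : ℕ), T ≤ L.length →
    sumG g (L.take T) = ∑ u ∈ Finset.range T, g (L.getD u dflt)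
  | _, 0, _ => by simp
  | [], T + 1, h => by simp at h
  | e :: L, T + 1, h => by
    rw [Finset.sum_range_succ']
    simp only [List.getD_cons_succ, List.getD_cons_zero]
    rw [← sumG_take_eq g dflt L T (by simpa using h)]
    simp only [List.take_succ_cons, sumG_cons]
    omega

lemma entry_zero_of_slice (g : (ℕ × ℕ × Q) → ℕ) (dflt : ℕ × ℕ × Q)
    {L : List (ℕ × ℕ × Q)} {u v : ℕ} (huv : u < v) (hv : v ≤ L.length)
    (h0 : sumG g ((L.take v).drop u) = 0) : g (L.getD u dflt) = 0 := by
  have hu : u < L.length := lt_of_lt_of_le huv hv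
  have hlen : 0 < ((L.take v).drop u).length := by
    simp only [List.length_drop, List.length_take]
    omega
  have hget : ((L.take v).drop u)[0]'hlen = L[u]'hu := by
    rw [List.getElem_drop]
    simp [List.getElem_take]
  have hmem : L[u]'hu ∈ (L.take v).drop u := hget ▸ List.getElem_mem hlen
  have hz : g (L[u]'hu) = 0 :=
    List.sum_eq_zero_iff.mp (by simpa [sumG] using h0) _ (List.mem_map_of_mem hmem)
  rw [List.getD_eq_getElem L dflt hu]
  exact hz

lemma entry_le (g : (ℕ × ℕ × Q) → ℕ) (dflt : ℕ × ℕ × Q) {k : ℕ}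
    {L : List (ℕ × ℕ × Q)} {u : ℕ} (hu : u < L.length)
    (hb : ∀ e ∈ L, g e ≤ k) : g (L.getD u dflt) ≤ k := by
  rw [List.getD_eq_getElem L dflt hu]
  exact hb _ (List.getElem_mem hu)

lemma extract {k : ℕ} (hk : ∀ q x y, (A.δ q x y).Nonempty → x.length + y.length ≤ k)
    {f : Q} {c : Q × List Letter} (hc : Relation.ReflTransGen A.Step c (f, [])) :
    ∀ s p q, c = (s, wrd p q) → k < p → k < q →
    ∃ (L : List (ℕ × ℕ × Q)) (s' : Q) (p' q' : ℕ),
      ITrail A s L s' ∧ p = p' + sumG (fun e => e.1) L ∧ q = q' + sumG (fun e => e.2.1) L ∧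
      (p' ≤ k ∨ q' ≤ k) ∧ Relation.ReflTransGen A.Step (s', wrd p' q') (f, []) := by
  induction hc using Relation.ReflTransGen.head_induction_on with
  | refl =>
      intro s p q hc hp hq
      exfalso
      have hnil : ([] : List Letter) = wrd p q := congrArg Prod.snd hc
      exact wrd_ne_nil (by omega) hnil.symm
  | @head a' c' hstep htail ih =>
      intro s p q hceq hp hq
      subst hceq
      obtain ⟨s₁, w₁⟩ := c'
      obtain ⟨x, y, hw, hmem⟩ := hstep
      simp only at hw hmem
      have hlen := hk s x y ⟨s₁, hmem⟩
      obtain ⟨hxa, hyb, hw₁⟩ := wrd_decomp hw (by omega) (by omega)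
      rw [hxa, hyb] at hmem
      by_cases hint : k < p - x.length ∧ k < q - y.length
      · obtain ⟨L, s', p', q', htr, hp', hq', hex, tl⟩ :=
          ih s₁ (p - x.length) (q - y.length) (by rw [hw₁]) hint.1 hint.2
        refine ⟨(x.length, y.length, s₁) :: L, s', p', q', ⟨hmem, htr⟩, ?_, ?_, hex, tl⟩
        · simp only [sumG_cons]; omega
        · simp only [sumG_cons]; omega
      · refine ⟨[(x.length, y.length, s₁)], s₁, p - x.length, q - y.length,
          ⟨hmem, rfl⟩, ?_, ?_, by omega, ?_⟩
        · simp only [sumG_cons, sumG_nil]; omega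
        · simp only [sumG_cons, sumG_nil]; omega
        · rw [← hw₁]; exact htail

lemma splice {L : List (ℕ × ℕ × Q)} {s' f : Q} {p q p' q' : ℕ}
    (htr : ITrail A A.q0 L s') (hp : p = p' + sumG (fun e => e.1) L)
    (hq : q = q' + sumG (fun e => e.2.1) L)
    (hf : f ∈ A.F) (tl : Relation.ReflTransGen A.Step (s', wrd p' q') (f, []))
    {t : ℕ} (ht : t ≤ L.length) {C : List (ℕ × ℕ × Q)}
    (hcy : ITrail A (stAt A.q0 L t) C (stAt A.q0 L t)) :
    wrd (p + sumG (fun e => e.1) C) (q + sumG (fun e => e.2.1) C) ∈ A.Lang := by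
  obtain ⟨h1, h2⟩ := ITrail_split A htr t ht
  have htr' : ITrail A A.q0 (L.take t ++ (C ++ L.drop t)) s' :=
    ITrail_comp A h1 (ITrail_comp A hcy h2)
  have hL1 : sumG (fun e => e.1) (L.take t) + sumG (fun e => e.1) (L.drop t)
      = sumG (fun e => e.1) L := by
    rw [← sumG_append, List.take_append_drop]
  have hL2 : sumG (fun e => e.2.1) (L.take t) + sumG (fun e => e.2.1) (L.drop t)
      = sumG (fun e => e.2.1) L := by
    rw [← sumG_append, List.take_append_drop]
  have hsI : sumG (fun e => e.1) (L.take t ++ (C ++ L.drop t))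
      = sumG (fun e => e.1) L + sumG (fun e => e.1) C := by
    rw [sumG_append, sumG_append]; omega
  have hsJ : sumG (fun e => e.2.1) (L.take t ++ (C ++ L.drop t))
      = sumG (fun e => e.2.1) L + sumG (fun e => e.2.1) C := by
    rw [sumG_append, sumG_append]; omega
  have run := ITrail_run A htr'
    (p := p + sumG (fun e => e.1) C) (q := q + sumG (fun e => e.2.1) C)
    (by rw [hsI]; omega) (by rw [hsJ]; omega)
  rw [hsI, hsJ] at run
  rw [show p + sumG (fun e => e.1) C -
        (sumG (fun e => e.1) L + sumG (fun e => e.1) C) = p' by omega,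
      show q + sumG (fun e => e.2.1) C -
        (sumG (fun e => e.2.1) L + sumG (fun e => e.2.1) C) = q' by omega] at run
  exact ⟨f, hf, run.trans tl⟩

end Trail

lemma wrd_snoc2 (n m : ℕ) : wrd n m ++ [b, b] = wrd n (m + 2) := by
  have : [b, b] = List.replicate 2 b := rfl
  simp [wrd, this, List.replicate_add, List.append_assoc]

lemma mem_union_iff (p q : ℕ) : wrd p q ∈ Lanbn ∪ Lanb2n ↔ (q = p ∨ q = 2 * p) := by
  constructor
  · rintro (⟨n, hn⟩ | ⟨n, hn⟩)
    · obtain ⟨h1, h2⟩ := wrd_inj (show wrd p q = wrd n n from hn)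
      left; omega
    · obtain ⟨h1, h2⟩ := wrd_inj (show wrd p q = wrd n (2 * n) from hn)
      right; omega
  · rintro (h | h)
    · exact Or.inl ⟨p, by rw [h]; rfl⟩
    · exact Or.inr ⟨p, by rw [h]; rfl⟩

section Machines

def M1 : WKAutomaton Letter Unit where
  q0 := ()
  F := {()}
  δ := fun _ x y => if x = [a] ∧ y = [b] then {()} else ∅
  finite_delta := by
    apply Set.Finite.subset
      (Set.finite_singleton (((), [a], [b]) : Unit × List Letter × List Letter))
    rintro ⟨q, x, y⟩ h
    simp only [Set.mem_setOf_eq] at h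
    by_cases hxy : x = [a] ∧ y = [b]
    · simp [hxy.1, hxy.2]
    · rw [if_neg hxy] at h
      simp at h

lemma M1_run : ∀ c : Unit × List Letter,
    Relation.ReflTransGen M1.Step c (((), []) : Unit × List Letter) →
    ∃ n, c.2 = wrd n n := by
  intro c h
  induction h using Relation.ReflTransGen.head_induction_on with
  | refl => exact ⟨0, by simp [wrd]⟩
  | @head a' c' hstep htail ih =>
    obtain ⟨x, y, hw, hmem⟩ := hstep
    by_cases hxy : x = [a] ∧ y = [b]
    · obtain ⟨n, hn⟩ := ih
      refine ⟨n + 1, ?_⟩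
      rw [hw, hn, hxy.1, hxy.2]
      rw [show [a] ++ wrd n n ++ [b] = (a :: wrd n n) ++ [b] by simp, cons_wrd, wrd_snoc]
    · exfalso
      rw [show M1.δ a'.1 x y = if x = [a] ∧ y = [b] then {()} else ∅ from rfl,
        if_neg hxy] at hmem
      exact hmem

lemma M1_accepts (n : ℕ) :
    Relation.ReflTransGen M1.Step ((), wrd n n) (((), []) : Unit × List Letter) := by
  induction n with
  | zero =>
    rw [show wrd 0 0 = [] by simp [wrd]]
  | succ n ih =>
    refine Relation.ReflTransGen.head ⟨[a], [b], ?_, ?_⟩ ih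
    · show wrd (n + 1) (n + 1) = [a] ++ wrd n n ++ [b]
      rw [show [a] ++ wrd n n ++ [b] = (a :: wrd n n) ++ [b] by simp, cons_wrd, wrd_snoc]
    · show () ∈ (if ([a] : List Letter) = [a] ∧ ([b] : List Letter) = [b]
          then ({()} : Set Unit) else ∅)
      simp

lemma part1 : AcceptsWith Letter (fun _ A => A.QuasiDet) Lanbn := by
  refine ⟨Unit, inferInstance, M1, ?_, ?_⟩
  · intro q w p r u v h1 h2
    exact Subsingleton.elim p r
  · intro w hw
    constructor
    · rintro ⟨qf, hqf, run⟩
      obtain ⟨n, hn⟩ := M1_run _ run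
      exact ⟨n, hn⟩
    · rintro ⟨n, rfl⟩
      exact ⟨(), rfl, M1_accepts n⟩

def M2 : WKAutomaton Letter Unit where
  q0 := ()
  F := {()}
  δ := fun _ x y => if x = [a] ∧ y = [b, b] then {()} else ∅
  finite_delta := by
    apply Set.Finite.subset
      (Set.finite_singleton (((), [a], [b, b]) : Unit × List Letter × List Letter))
    rintro ⟨q, x, y⟩ h
    simp only [Set.mem_setOf_eq] at h
    by_cases hxy : x = [a] ∧ y = [b, b]
    · simp [hxy.1, hxy.2]
    · rw [if_neg hxy] at h
      simp at h

lemma M2_run : ∀ c : Unit × List Letter,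
    Relation.ReflTransGen M2.Step c (((), []) : Unit × List Letter) →
    ∃ n, c.2 = wrd n (2 * n) := by
  intro c h
  induction h using Relation.ReflTransGen.head_induction_on with
  | refl => exact ⟨0, by simp [wrd]⟩
  | @head a' c' hstep htail ih =>
    obtain ⟨x, y, hw, hmem⟩ := hstep
    by_cases hxy : x = [a] ∧ y = [b, b]
    · obtain ⟨n, hn⟩ := ih
      refine ⟨n + 1, ?_⟩
      rw [hw, hn, hxy.1, hxy.2]
      rw [show [a] ++ wrd n (2 * n) ++ [b, b] = (a :: wrd n (2 * n)) ++ [b, b] by simp,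
        cons_wrd, wrd_snoc2, show 2 * n + 2 = 2 * (n + 1) from by omega]
    · exfalso
      rw [show M2.δ a'.1 x y = if x = [a] ∧ y = [b, b] then {()} else ∅ from rfl,
        if_neg hxy] at hmem
      exact hmem

lemma M2_accepts (n : ℕ) :
    Relation.ReflTransGen M2.Step ((), wrd n (2 * n)) (((), []) : Unit × List Letter) := by
  induction n with
  | zero =>
    rw [show wrd 0 (2 * 0) = [] by simp [wrd]]
  | succ n ih =>
    refine Relation.ReflTransGen.head ⟨[a], [b, b], ?_, ?_⟩ ih
    · show wrd (n + 1) (2 * (n + 1)) = [a] ++ wrd n (2 * n) ++ [b, b]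
      rw [show 2 * (n + 1) = 2 * n + 2 from by omega,
        show [a] ++ wrd n (2 * n) ++ [b, b] = (a :: wrd n (2 * n)) ++ [b, b] by simp,
        cons_wrd, wrd_snoc2]
    · show () ∈ (if ([a] : List Letter) = [a] ∧ ([b, b] : List Letter) = [b, b]
          then ({()} : Set Unit) else ∅)
      simp

lemma part2 : AcceptsWith Letter (fun _ A => A.QuasiDet) Lanb2n := by
  refine ⟨Unit, inferInstance, M2, ?_, ?_⟩
  · intro q w p r u v h1 h2
    exact Subsingleton.elim p r
  · intro w hw
    constructor
    · rintro ⟨qf, hqf, run⟩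
      obtain ⟨n, hn⟩ := M2_run _ run
      exact ⟨n, hn⟩
    · rintro ⟨n, rfl⟩
      exact ⟨(), rfl, M2_accepts n⟩

end Machines

lemma part3 : ¬ AcceptsWith Letter (fun _ A => A.QuasiDet) (Lanbn ∪ Lanb2n) := by
  rintro ⟨Q, hfinQ, A, hqd, heq⟩
  classical
  have fQ : Fintype Q := Fintype.ofFinite Q
  obtain ⟨k, hk⟩ : ∃ k, ∀ q x y, (A.δ q x y).Nonempty → x.length + y.length ≤ k := by
    obtain ⟨k, hkub⟩ := (A.finite_delta.image
      (fun t : Q × List Letter × List Letter => t.2.1.length + t.2.2.length)).bddAbove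
    exact ⟨k, fun q x y hne => hkub ⟨(q, x, y), hne, rfl⟩⟩
  set Cq := Fintype.card Q with hCq
  set K := k * Cq with hK
  set N := K + k + 1 with hN
  have hmem1 : wrd N N ∈ A.Lang :=
    (heq _ (wrd_ne_nil (by omega))).mpr (Or.inl ⟨N, rfl⟩)
  obtain ⟨f₁, hf₁, run1⟩ := hmem1
  obtain ⟨L₁, s₁', p₁', q₁', tr₁, hp₁, hq₁, hex₁, tl₁⟩ :=
    extract A hk run1 A.q0 N N rfl (by omega) (by omega)
  have hmem2 : wrd N (2 * N) ∈ A.Lang :=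
    (heq _ (wrd_ne_nil (by omega))).mpr (Or.inr ⟨N, rfl⟩)
  obtain ⟨f₂, hf₂, run2⟩ := hmem2
  obtain ⟨L₂, s₂', p₂', q₂', tr₂, hp₂, hq₂, hex₂, tl₂⟩ :=
    extract A hk run2 A.q0 N (2 * N) rfl (by omega) (by omega)
  set T := min L₁.length L₂.length with hT
  have hTlen1 : T ≤ L₁.length := min_le_left _ _
  have hTlen2 : T ≤ L₂.length := min_le_right _ _
  have claimA : ∀ t t', t < t' → t' ≤ T → stAt A.q0 L₁ t' = stAt A.q0 L₁ t →
      sumG (fun e => e.1) ((L₁.take t').drop t) = 0 ∧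
      sumG (fun e => e.2.1) ((L₁.take t').drop t) = 0 ∧
      sumG (fun e => e.1) ((L₂.take t').drop t) = 0 ∧
      sumG (fun e => e.2.1) ((L₂.take t').drop t) = 0 := by
    intro t t' htt' ht'T hst
    have ht'1 : t' ≤ L₁.length := le_trans ht'T hTlen1
    have ht'2 : t' ≤ L₂.length := le_trans ht'T hTlen2
    have ht1 : t ≤ L₁.length := by omega
    have ht2 : t ≤ L₂.length := by omega
    have hs2t : stAt A.q0 L₂ t = stAt A.q0 L₁ t :=
      (states_agree A hqd t tr₁ tr₂ ht1 ht2).symm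
    have hs2t' : stAt A.q0 L₂ t' = stAt A.q0 L₁ t' :=
      (states_agree A hqd t' tr₁ tr₂ ht'1 ht'2).symm
    have h1 := (ITrail_split A tr₁ t' ht'1).1
    have h1s := (ITrail_split A h1 t (by rw [List.length_take]; omega)).2
    have hcy₁ : ITrail A (stAt A.q0 L₁ t) ((L₁.take t').drop t) (stAt A.q0 L₁ t) := by
      rw [stAt_take _ t t' (le_of_lt htt'), hst] at h1s
      exact h1s
    have h2 := (ITrail_split A tr₂ t' ht'2).1
    have h2s := (ITrail_split A h2 t (by rw [List.length_take]; omega)).2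
    have hcy₂ : ITrail A (stAt A.q0 L₁ t) ((L₂.take t').drop t) (stAt A.q0 L₁ t) := by
      rw [stAt_take _ t t' (le_of_lt htt'), hs2t, hs2t', hst] at h2s
      exact h2s
    have hcy₁' : ITrail A (stAt A.q0 L₂ t) ((L₁.take t').drop t) (stAt A.q0 L₂ t) := by
      rw [hs2t]; exact hcy₁
    have hcy₂' : ITrail A (stAt A.q0 L₂ t) ((L₂.take t').drop t) (stAt A.q0 L₂ t) := by
      rw [hs2t]; exact hcy₂
    have m11 := splice A tr₁ hp₁ hq₁ hf₁ tl₁ ht1 hcy₁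
    have m12 := splice A tr₂ hp₂ hq₂ hf₂ tl₂ ht2 hcy₁'
    have m21 := splice A tr₁ hp₁ hq₁ hf₁ tl₁ ht1 hcy₂
    have m22 := splice A tr₂ hp₂ hq₂ hf₂ tl₂ ht2 hcy₂'
    have e11 := (mem_union_iff _ _).mp ((heq _ (wrd_ne_nil (by omega))).mp m11)
    have e12 := (mem_union_iff _ _).mp ((heq _ (wrd_ne_nil (by omega))).mp m12)
    have e21 := (mem_union_iff _ _).mp ((heq _ (wrd_ne_nil (by omega))).mp m21)
    have e22 := (mem_union_iff _ _).mp ((heq _ (wrd_ne_nil (by omega))).mp m22)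
    have b1I : sumG (fun e => e.1) ((L₁.take t').drop t) ≤ N :=
      le_trans (sumG_slice_le _ L₁ t t') (by omega)
    have b1J : sumG (fun e => e.2.1) ((L₁.take t').drop t) ≤ N :=
      le_trans (sumG_slice_le _ L₁ t t') (by omega)
    have b2I : sumG (fun e => e.1) ((L₂.take t').drop t) ≤ N :=
      le_trans (sumG_slice_le _ L₂ t t') (by omega)
    have b2J : sumG (fun e => e.2.1) ((L₂.take t').drop t) ≤ 2 * N :=
      le_trans (sumG_slice_le _ L₂ t t') (by omega)
    refine ⟨?_, ?_, ?_, ?_⟩ <;> omega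
  set P : ℕ → Prop :=
    fun u => ∀ v, u < v → v ≤ T → stAt A.q0 L₁ v ≠ stAt A.q0 L₁ u with hP
  set S : Finset ℕ := (Finset.range T).filter P with hS
  have hcardS : S.card ≤ Cq := by
    have hinj : Set.InjOn (fun u => stAt A.q0 L₁ u) ↑S := by
      intro u hu v hv huv
      simp only [hS, Finset.coe_filter, Set.mem_setOf_eq, Finset.mem_range, hP] at hu hv
      rcases lt_trichotomy u v with h | h | h
      · exact absurd huv.symm (hu.2 v h (by omega))
      · exact h
      · exact absurd huv (hv.2 u h (by omega))
    have := Finset.card_le_card_of_injOn (fun u => stAt A.q0 L₁ u)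
      (fun u _ => Finset.mem_univ _) hinj
    simpa [hCq] using this
  have main_bound : ∀ (L : List (ℕ × ℕ × Q)) (g : (ℕ × ℕ × Q) → ℕ),
      T ≤ L.length → (∀ e ∈ L, g e ≤ k) →
      (∀ u v, u < v → v ≤ T → stAt A.q0 L₁ v = stAt A.q0 L₁ u →
        sumG g ((L.take v).drop u) = 0) →
      sumG g (L.take T) ≤ K := by
    intro L g hTL hgk hzero
    rw [sumG_take_eq g (0, 0, A.q0) L T hTL]
    have hstep : ∀ u ∈ Finset.range T,
        g (L.getD u (0, 0, A.q0)) = if P u then g (L.getD u (0, 0, A.q0)) else 0 := by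
      intro u hu
      by_cases h : P u
      · rw [if_pos h]
      · rw [if_neg h]
        simp only [hP] at h
        push_neg at h
        obtain ⟨v, hv1, hv2, hv3⟩ := h
        exact entry_zero_of_slice g _ hv1 (by omega) (hzero u v hv1 hv2 hv3)
    rw [Finset.sum_congr rfl hstep, ← Finset.sum_filter, ← hS]
    calc ∑ u ∈ S, g (L.getD u (0, 0, A.q0))
        ≤ S.card • k := by
          apply Finset.sum_le_card_nsmul
          intro u hu
          have huT : u < T := by
            have := Finset.mem_filter.mp (hS ▸ hu)
            exact Finset.mem_range.mp this.1
          exact entry_le g _ (by omega) hgk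
      _ = S.card * k := smul_eq_mul ..
      _ ≤ Cq * k := Nat.mul_le_mul_right _ hcardS
      _ = K := by rw [hK, Nat.mul_comm]
  have bnd1I : sumG (fun e => e.1) (L₁.take T) ≤ K :=
    main_bound L₁ _ hTlen1 (fun e he => (ITrail_bound A hk tr₁ e he).1)
      (fun u v h1 h2 h3 => (claimA u v h1 h2 h3).1)
  have bnd1J : sumG (fun e => e.2.1) (L₁.take T) ≤ K :=
    main_bound L₁ _ hTlen1 (fun e he => (ITrail_bound A hk tr₁ e he).2)
      (fun u v h1 h2 h3 => (claimA u v h1 h2 h3).2.1)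
  have bnd2I : sumG (fun e => e.1) (L₂.take T) ≤ K :=
    main_bound L₂ _ hTlen2 (fun e he => (ITrail_bound A hk tr₂ e he).1)
      (fun u v h1 h2 h3 => (claimA u v h1 h2 h3).2.2.1)
  have bnd2J : sumG (fun e => e.2.1) (L₂.take T) ≤ K :=
    main_bound L₂ _ hTlen2 (fun e he => (ITrail_bound A hk tr₂ e he).2)
      (fun u v h1 h2 h3 => (claimA u v h1 h2 h3).2.2.2)
  rcases le_total L₁.length L₂.length with hll | hll
  · have hTeq : T = L₁.length := by rw [hT]; omega
    rw [hTeq, List.take_length] at bnd1I bnd1J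
    omega
  · have hTeq : T = L₂.length := by rw [hT]; omega
    rw [hTeq, List.take_length] at bnd2I bnd2J
    omega

end WKUnionProof

/-- The class of languages accepted by quasi-deterministic sensing 5'→3' WK
automata is not closed under union: `L₁ = { aⁿbⁿ }` and `L₂ = { aⁿb²ⁿ }` are
each accepted by a quasi-deterministic sensing 5'→3' WK automaton, but
`L₁ ∪ L₂` is not. -/
theorem quasiDet_not_closed_under_union :
    AcceptsWith Letter (fun _ A => A.QuasiDet) Lanbn ∧
    AcceptsWith Letter (fun _ A => A.QuasiDet) Lanb2n ∧
    ¬ AcceptsWith Letter (fun _ A => A.QuasiDet) (Lanbn ∪ Lanb2n) :=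
  ⟨WKUnionProof.part1, WKUnionProof.part2, WKUnionProof.part3⟩
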